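/- The effective rank along the solution set S satisfies: for every x ∈ ℝ, 1 < erank(W_x) ≤ 2; erank(W_x) = 2 if and only if x = 0; erank(W_x) = erank(W_{−x}); for all 0 ≤ x < y one has erank(W_y) < erank(W_x) (strict monotone decrease in |x|); and erank(W_x) → 1 as |x| → ∞. -/

import Mathlib

open Matrix Filter

/-- The matrix `W_x = [[x,1],[1,0]]`. -/
noncomputable def Wmat (x : ℝ) : Matrix (Fin 2) (Fin 2) ℝ := !![x, 1; 1, 0]

/-- Largest singular value of a 2×2 real matrix, via the variational characterization. -/
noncomputable def sigma1 (A : Matrix (Fin 2) (Fin 2) ℝ) : ℝ :=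
  sSup {r : ℝ | ∃ v : EuclideanSpace ℝ (Fin 2), ‖v‖ = 1 ∧ r = ‖Matrix.toEuclideanLin A v‖}

/-- Smallest singular value of a 2×2 real matrix, via the variational characterization. -/
noncomputable def sigma2 (A : Matrix (Fin 2) (Fin 2) ℝ) : ℝ :=
  sInf {r : ℝ | ∃ v : EuclideanSpace ℝ (Fin 2), ‖v‖ = 1 ∧ r = ‖Matrix.toEuclideanLin A v‖}

/-- Shannon entropy of the distribution `(p, q)`, with the convention `0·ln 0 = 0`
(automatic since `Real.log 0 = 0`). -/
noncomputable def entH (p q : ℝ) : ℝ := -(p * Real.log p) - q * Real.log q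

/-- Effective rank `erank(W) = exp H(ρ₁, ρ₂)` where `ρᵢ = σᵢ/(σ₁+σ₂)`. -/
noncomputable def erank (A : Matrix (Fin 2) (Fin 2) ℝ) : ℝ :=
  Real.exp (entH (sigma1 A / (sigma1 A + sigma2 A)) (sigma2 A / (sigma1 A + sigma2 A)))

-- purely algebraic key inequalities, for t ≥ 0

lemma key_bounds (s t a b : ℝ) (ht0 : 0 ≤ t) (hts : t ≤ s) (hs2 : s^2 = t^2+4)
    (ha : a^2+b^2 = 1) :
    ((s-t)/2)^2 ≤ (t*a+b)^2+a^2 ∧ (t*a+b)^2+a^2 ≤ ((s+t)/2)^2 := by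
  set p := Real.sqrt (t*(s-t)) with hpd
  set q := Real.sqrt (t*(s+t)) with hqd
  have hp2 : p^2 = t*(s-t) := Real.sq_sqrt (by nlinarith)
  have hq2 : q^2 = t*(s+t) := Real.sq_sqrt (by nlinarith)
  have hpq : p*q = 2*t := by
    rw [hpd, hqd, ← Real.sqrt_mul (by nlinarith)]
    rw [show t*(s-t)*(t*(s+t)) = (2*t)^2 by nlinarith]
    exact Real.sqrt_sq (by linarith)
  have expand1 : (q*a+p*b)^2 = (t*s+t^2)*a^2 + 4*t*(a*b) + (t*s-t^2)*b^2 := by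
    have h1 : (q*a+p*b)^2 = q^2*a^2 + 2*(p*q)*(a*b) + p^2*b^2 := by ring
    rw [h1, hq2, hp2, hpq]; ring
  have expand2 : (p*a-q*b)^2 = (t*s-t^2)*a^2 - 4*t*(a*b) + (t*s+t^2)*b^2 := by
    have h1 : (p*a-q*b)^2 = p^2*a^2 - 2*(p*q)*(a*b) + q^2*b^2 := by ring
    rw [h1, hq2, hp2, hpq]; ring
  constructor
  · nlinarith [sq_nonneg (q*a+p*b), expand1]
  · nlinarith [sq_nonneg (p*a-q*b), expand2]

lemma norm_apply_sq (x : ℝ) (v : EuclideanSpace ℝ (Fin 2)) :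
    ‖Matrix.toEuclideanLin (Wmat x) v‖^2 = (x * v 0 + v 1)^2 + (v 0)^2 := by
  rw [EuclideanSpace.norm_eq, Real.sq_sqrt (by positivity)]
  simp [Fin.sum_univ_two, Matrix.toEuclideanLin_apply, Matrix.mulVec, Wmat,
    dotProduct, Fin.sum_univ_two, sq_abs, Matrix.vecHead, Matrix.vecTail]

lemma norm_unit (v : EuclideanSpace ℝ (Fin 2)) (h : ‖v‖ = 1) : (v 0)^2 + (v 1)^2 = 1 := by
  have := congrArg (·^2) h
  simp only [EuclideanSpace.norm_eq] at this
  rw [Real.sq_sqrt (by positivity)] at this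
  simpa [Fin.sum_univ_two, sq_abs] using this

lemma Wmat_bounds (x : ℝ) (v : EuclideanSpace ℝ (Fin 2)) (h : ‖v‖ = 1) :
    (Real.sqrt (x^2+4) - |x|)/2 ≤ ‖Matrix.toEuclideanLin (Wmat x) v‖ ∧
    ‖Matrix.toEuclideanLin (Wmat x) v‖ ≤ (Real.sqrt (x^2+4) + |x|)/2 := by
  set s := Real.sqrt (x^2+4) with hs
  have hs2 : s^2 = x^2+4 := Real.sq_sqrt (by positivity)
  have hs0 : 0 < s := Real.sqrt_pos.mpr (by positivity)
  have ht2 : |x|^2 = x^2 := sq_abs x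
  have ht0 : 0 ≤ |x| := abs_nonneg x
  have hts : |x| ≤ s := by nlinarith
  have hN := norm_apply_sq x v
  have ha := norm_unit v h
  set a := v 0
  set b := v 1
  have hNn : (0:ℝ) ≤ ‖Matrix.toEuclideanLin (Wmat x) v‖ := norm_nonneg _
  have hkey : ((s-|x|)/2)^2 ≤ (x*a+b)^2+a^2 ∧ (x*a+b)^2+a^2 ≤ ((s+|x|)/2)^2 := by
    rcases abs_cases x with ⟨hx, hx0⟩ | ⟨hx, hx0⟩
    · rw [hx]; exact key_bounds s x a b hx0 (hx ▸ hts) (by nlinarith) ha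
    · rw [hx]
      have := key_bounds s (-x) a (-b) (by linarith) (hx ▸ hts) (by nlinarith)
        (by nlinarith)
      constructor
      · rcases this with ⟨h1, _⟩; nlinarith [h1]
      · rcases this with ⟨_, h2⟩; nlinarith [h2]
  constructor
  · have h1 := Real.sqrt_le_sqrt (hN ▸ hkey.1)
    rwa [Real.sqrt_sq (by linarith), Real.sqrt_sq hNn] at h1
  · have h2 := Real.sqrt_le_sqrt (hN ▸ hkey.2)
    rwa [Real.sqrt_sq hNn, Real.sqrt_sq (by positivity)] at h2

lemma exists_unit_eigen (x lam : ℝ) (hlam : lam^2 = x*lam + 1) :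
    ∃ v : EuclideanSpace ℝ (Fin 2), ‖v‖ = 1 ∧
      ‖Matrix.toEuclideanLin (Wmat x) v‖ = |lam| := by
  set n := Real.sqrt (lam^2+1) with hn
  have hn2 : n^2 = lam^2+1 := Real.sq_sqrt (by positivity)
  have hn0 : 0 < n := Real.sqrt_pos.mpr (by positivity)
  refine ⟨(WithLp.equiv 2 (Fin 2 → ℝ)).symm ![lam/n, 1/n], ?_, ?_⟩
  · rw [EuclideanSpace.norm_eq]
    have : ∑ i : Fin 2, ‖((WithLp.equiv 2 (Fin 2 → ℝ)).symm ![lam/n, 1/n]) i‖^2 = 1 := by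
      simp [Fin.sum_univ_two, sq_abs]
      field_simp
      linarith [hn2]
    rw [this, Real.sqrt_one]
  · have hv0 : ((WithLp.equiv 2 (Fin 2 → ℝ)).symm ![lam/n, 1/n]) 0 = lam/n := rfl
    have hv1 : ((WithLp.equiv 2 (Fin 2 → ℝ)).symm ![lam/n, 1/n]) 1 = 1/n := rfl
    have hsq := norm_apply_sq x ((WithLp.equiv 2 (Fin 2 → ℝ)).symm ![lam/n, 1/n])
    rw [hv0, hv1] at hsq
    have : ‖Matrix.toEuclideanLin (Wmat x) ((WithLp.equiv 2 (Fin 2 → ℝ)).symm ![lam/n, 1/n])‖^2 = lam^2 := by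
      rw [hsq]
      field_simp
      nlinarith [hn2, hlam]
    calc ‖Matrix.toEuclideanLin (Wmat x) ((WithLp.equiv 2 (Fin 2 → ℝ)).symm ![lam/n, 1/n])‖
        = Real.sqrt (‖Matrix.toEuclideanLin (Wmat x) ((WithLp.equiv 2 (Fin 2 → ℝ)).symm ![lam/n, 1/n])‖^2) := (Real.sqrt_sq (norm_nonneg _)).symm
      _ = Real.sqrt (lam^2) := by rw [this]
      _ = |lam| := Real.sqrt_sq_eq_abs lam

lemma mems (x : ℝ) :
    ((Real.sqrt (x^2+4) + |x|)/2 ∈ {r : ℝ | ∃ v : EuclideanSpace ℝ (Fin 2), ‖v‖ = 1 ∧ r = ‖Matrix.toEuclideanLin (Wmat x) v‖}) ∧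
    ((Real.sqrt (x^2+4) - |x|)/2 ∈ {r : ℝ | ∃ v : EuclideanSpace ℝ (Fin 2), ‖v‖ = 1 ∧ r = ‖Matrix.toEuclideanLin (Wmat x) v‖}) := by
  set s := Real.sqrt (x^2+4) with hs
  have hs2 : s^2 = x^2+4 := Real.sq_sqrt (by positivity)
  have hs0 : 0 < s := Real.sqrt_pos.mpr (by positivity)
  have hts : |x| ≤ s := by nlinarith [sq_abs x, abs_nonneg x]
  have h1 : ((x+s)/2)^2 = x*((x+s)/2) + 1 := by nlinarith
  have h2 : ((x-s)/2)^2 = x*((x-s)/2) + 1 := by nlinarith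
  obtain ⟨v1, hv1, hn1⟩ := exists_unit_eigen x ((x+s)/2) h1
  obtain ⟨v2, hv2, hn2⟩ := exists_unit_eigen x ((x-s)/2) h2
  rcases abs_cases x with ⟨hx, hx0⟩ | ⟨hx, hx0⟩
  · constructor
    · exact ⟨v1, hv1, by rw [hn1, hx, abs_of_nonneg (by linarith)]; ring⟩
    · exact ⟨v2, hv2, by rw [hn2, hx, abs_of_nonpos (by nlinarith)]; ring⟩
  · constructor
    · exact ⟨v2, hv2, by rw [hn2, hx, abs_of_nonpos (by nlinarith)]; ring⟩
    · exact ⟨v1, hv1, by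
        rw [hn1, hx, abs_of_nonneg (by rw [hx] at hts; linarith)]; ring⟩

lemma sigma_eq (x : ℝ) :
    sigma1 (Wmat x) = (Real.sqrt (x^2+4) + |x|)/2 ∧
    sigma2 (Wmat x) = (Real.sqrt (x^2+4) - |x|)/2 := by
  obtain ⟨hm1, hm2⟩ := mems x
  have bddA : BddAbove {r : ℝ | ∃ v : EuclideanSpace ℝ (Fin 2), ‖v‖ = 1 ∧ r = ‖Matrix.toEuclideanLin (Wmat x) v‖} :=
    ⟨(Real.sqrt (x^2+4) + |x|)/2, by rintro r ⟨v, hv, rfl⟩; exact (Wmat_bounds x v hv).2⟩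
  have bddB : BddBelow {r : ℝ | ∃ v : EuclideanSpace ℝ (Fin 2), ‖v‖ = 1 ∧ r = ‖Matrix.toEuclideanLin (Wmat x) v‖} :=
    ⟨(Real.sqrt (x^2+4) - |x|)/2, by rintro r ⟨v, hv, rfl⟩; exact (Wmat_bounds x v hv).1⟩
  constructor
  · refine le_antisymm (csSup_le ⟨_, hm1⟩ ?_) (le_csSup bddA hm1)
    rintro r ⟨v, hv, rfl⟩; exact (Wmat_bounds x v hv).2
  · refine le_antisymm (csInf_le bddB hm2) (le_csInf ⟨_, hm2⟩ ?_)
    rintro r ⟨v, hv, rfl⟩; exact (Wmat_bounds x v hv).1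

noncomputable def Pfun (x : ℝ) : ℝ :=
  (Real.sqrt (x^2+4) + |x|) / (2*Real.sqrt (x^2+4))

lemma entH_eq_binEntropy (p : ℝ) : entH p (1-p) = Real.binEntropy p := by
  simp [entH, Real.binEntropy, Real.log_inv]; ring

lemma erank_eq (x : ℝ) : erank (Wmat x) = Real.exp (Real.binEntropy (Pfun x)) := by
  obtain ⟨h1, h2⟩ := sigma_eq x
  set s := Real.sqrt (x^2+4) with hs
  have hs2 : s^2 = x^2+4 := Real.sq_sqrt (by positivity)
  have hs0 : 0 < s := Real.sqrt_pos.mpr (by positivity)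
  rw [erank, h1, h2]
  have hsum : (s + |x|)/2 + (s - |x|)/2 = s := by ring
  rw [hsum]
  have hP1 : (s + |x|)/2 / s = Pfun x := by rw [Pfun]; field_simp; rw [← hs]; ring
  have hP2 : (s - |x|)/2 / s = 1 - Pfun x := by rw [Pfun]; field_simp; ring
  rw [hP1, hP2, entH_eq_binEntropy]

lemma Pfun_half_le (x : ℝ) : 1/2 ≤ Pfun x := by
  have hs0 : 0 < Real.sqrt (x^2+4) := Real.sqrt_pos.mpr (by positivity)
  rw [Pfun, le_div_iff₀ (by linarith)]
  nlinarith [abs_nonneg x]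

lemma Pfun_lt_one (x : ℝ) : Pfun x < 1 := by
  have hs2 : Real.sqrt (x^2+4)^2 = x^2+4 := Real.sq_sqrt (by positivity)
  have hs0 : 0 < Real.sqrt (x^2+4) := Real.sqrt_pos.mpr (by positivity)
  have hts : |x| < Real.sqrt (x^2+4) := by nlinarith [sq_abs x, abs_nonneg x]
  rw [Pfun, div_lt_one (by linarith)]
  linarith

lemma Pfun_eq_half_iff (x : ℝ) : Pfun x = 1/2 ↔ x = 0 := by
  have hs0 : 0 < Real.sqrt (x^2+4) := Real.sqrt_pos.mpr (by positivity)
  rw [Pfun]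
  rw [div_eq_iff (by linarith)]
  constructor
  · intro h
    have : |x| = 0 := by linarith
    exact abs_eq_zero.mp this
  · intro h; rw [h]; simp

lemma Pfun_strictMono {x y : ℝ} (hx : 0 ≤ x) (hxy : x < y) : Pfun x < Pfun y := by
  set sx := Real.sqrt (x^2+4) with hsx
  set sy := Real.sqrt (y^2+4) with hsy
  have hsx2 : sx^2 = x^2+4 := Real.sq_sqrt (by positivity)
  have hsy2 : sy^2 = y^2+4 := Real.sq_sqrt (by positivity)
  have hsx0 : 0 < sx := Real.sqrt_pos.mpr (by positivity)
  have hsy0 : 0 < sy := Real.sqrt_pos.mpr (by positivity)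
  have hy0 : 0 < y := lt_of_le_of_lt hx hxy
  rw [Pfun, Pfun, div_lt_div_iff₀ (by linarith) (by linarith)]
  rw [abs_of_nonneg hx, abs_of_nonneg hy0.le]
  have key : x * sy < y * sx := by
    have hpos : 0 < y*sx + x*sy := by positivity
    nlinarith [hpos, mul_pos hsx0 hsy0]
  nlinarith [mul_pos hsx0 hsy0]

lemma Pfun_tendsto_atTop : Tendsto Pfun atTop (nhds 1) := by
  have h1 : Tendsto (fun x : ℝ => x^2+4) atTop atTop :=
    tendsto_atTop_add_const_right _ 4 (tendsto_pow_atTop two_ne_zero)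
  have h2 : Tendsto (fun x : ℝ => 4/(x^2+4)) atTop (nhds 0) :=
    Tendsto.div_atTop tendsto_const_nhds h1
  have hcont : Continuous (fun u : ℝ => 1/2 + Real.sqrt (1-u)/2) := by
    continuity
  have h3 : Tendsto (fun x : ℝ => 1/2 + Real.sqrt (1-4/(x^2+4))/2) atTop (nhds 1) := by
    have := (hcont.continuousAt (x := (0:ℝ))).tendsto.comp h2
    norm_num [Function.comp_def] at this
    exact this
  refine h3.congr' ?_
  filter_upwards [eventually_gt_atTop (0:ℝ)] with x hx0
  have hs2 : Real.sqrt (x^2+4)^2 = x^2+4 := Real.sq_sqrt (by positivity)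
  have hs0 : 0 < Real.sqrt (x^2+4) := Real.sqrt_pos.mpr (by positivity)
  have harg : 1 - 4/(x^2+4) = (x/Real.sqrt (x^2+4))^2 := by
    rw [div_pow, hs2]
    field_simp
    ring
  rw [harg, Real.sqrt_sq (by positivity)]
  rw [Pfun, abs_of_nonneg hx0.le]
  field_simp

lemma Pfun_pos (x : ℝ) : 0 < Pfun x := lt_of_lt_of_le (by norm_num) (Pfun_half_le x)

/-- **Effective rank along the solution set.**  For every `x`, `1 < erank(W_x) ≤ 2`;
`erank(W_x) = 2` iff `x = 0`; `erank` is even in `x`; it strictly decreases in `|x|`;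
and it tends to `1` as `|x| → ∞`. -/
theorem erank_along_solution_set :
    (∀ x : ℝ, 1 < erank (Wmat x) ∧ erank (Wmat x) ≤ 2) ∧
    (∀ x : ℝ, erank (Wmat x) = 2 ↔ x = 0) ∧
    (∀ x : ℝ, erank (Wmat (-x)) = erank (Wmat x)) ∧
    (∀ x y : ℝ, 0 ≤ x → x < y → erank (Wmat y) < erank (Wmat x)) ∧
    Tendsto (fun x : ℝ => erank (Wmat x)) atTop (nhds 1) ∧
    Tendsto (fun x : ℝ => erank (Wmat x)) atBot (nhds 1) := by
  have htop : Tendsto (fun x : ℝ => erank (Wmat x)) atTop (nhds 1) := by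
    have hc : Continuous (fun p : ℝ => Real.exp (Real.binEntropy p)) :=
      Real.continuous_exp.comp Real.binEntropy_continuous
    have := (hc.continuousAt (x := (1:ℝ))).tendsto.comp Pfun_tendsto_atTop
    simp only [Function.comp_def, Real.binEntropy_one, Real.exp_zero] at this
    exact this.congr (fun x => (erank_eq x).symm)
  have heven : ∀ x : ℝ, erank (Wmat (-x)) = erank (Wmat x) := by
    intro x
    rw [erank_eq, erank_eq]
    have : Pfun (-x) = Pfun x := by rw [Pfun, Pfun, neg_pow, abs_neg]; ring_nf
    rw [this]
  refine ⟨?_, ?_, heven, ?_, htop, ?_⟩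
  · intro x
    rw [erank_eq]
    constructor
    · rw [show (1:ℝ) = Real.exp 0 by simp]
      exact Real.exp_lt_exp.mpr (Real.binEntropy_pos (Pfun_pos x) (Pfun_lt_one x))
    · rw [show (2:ℝ) = Real.exp (Real.log 2) by rw [Real.exp_log]; norm_num]
      exact Real.exp_le_exp.mpr Real.binEntropy_le_log_two
  · intro x
    rw [erank_eq, show (2:ℝ) = Real.exp (Real.log 2) by rw [Real.exp_log]; norm_num,
      Real.exp_eq_exp, Real.binEntropy_eq_log_two]
    rw [show (2:ℝ)⁻¹ = 1/2 by norm_num]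
    exact Pfun_eq_half_iff x
  · intro x y hx hxy
    rw [erank_eq, erank_eq]
    apply Real.exp_lt_exp.mpr
    have hmemx : Pfun x ∈ Set.Icc (2:ℝ)⁻¹ 1 :=
      ⟨by rw [show (2:ℝ)⁻¹ = 1/2 by norm_num]; exact Pfun_half_le x, (Pfun_lt_one x).le⟩
    have hmemy : Pfun y ∈ Set.Icc (2:ℝ)⁻¹ 1 :=
      ⟨by rw [show (2:ℝ)⁻¹ = 1/2 by norm_num]; exact Pfun_half_le y, (Pfun_lt_one y).le⟩
    exact Real.binEntropy_strictAntiOn hmemx hmemy (Pfun_strictMono hx hxy)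
  · have hneg : Tendsto (fun x : ℝ => -x) atBot atTop := tendsto_neg_atBot_atTop
    have := htop.comp hneg
    simp only [Function.comp_def] at this
    exact this.congr (fun x => heven x)
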